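/- Let k be a field complete with respect to a nontrivial non-Archimedean absolute value, and let k^ac be an algebraic closure of k with the unique extension of the absolute value. Then the completion ℂ_k of k^ac is separably closed. -/

import Mathlib

open Polynomial IsUltrametricDist Filter Finset Topology

section Hensel
variable {K : Type*} [NormedField K] [IsUltrametricDist K]

/-- The closed unit ball of an ultrametric normed field, as a subring. -/
def unitBallSubring (K : Type*) [NormedField K] [IsUltrametricDist K] : Subring K where
  carrier := {x | ‖x‖ ≤ 1}
  mul_mem' {a b} ha hb := by
    simpa only [Set.mem_setOf_eq, norm_mul] using mul_le_one₀ ha (norm_nonneg _) hb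
  one_mem' := by simp
  add_mem' {a b} ha hb := le_trans (norm_add_le_max a b) (max_le ha hb)
  zero_mem' := by simp
  neg_mem' {a} ha := by simpa using ha

lemma mem_unitBallSubring {x : K} : x ∈ unitBallSubring K ↔ ‖x‖ ≤ 1 := Iff.rfl

lemma coeffs_subset_unitBallSubring {F : K[X]} (hF : ∀ i, ‖F.coeff i‖ ≤ 1) :
    (↑F.coeffs : Set K) ⊆ (unitBallSubring K : Set K) := by
  intro c hc
  simp only [Finset.coe_sort_coe, Finset.mem_coe, mem_coeffs_iff] at hc
  obtain ⟨n, -, rfl⟩ := hc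
  exact hF n

lemma eval_map_subring (O : Subring K) (H : Polynomial O) (a : O) :
    (H.map O.subtype).eval (a : K) = ((H.eval a : O) : K) := by
  rw [eval_map]
  exact eval₂_at_apply (p := H) O.subtype a

lemma taylor_bound (F : K[X]) (hF : ∀ i, ‖F.coeff i‖ ≤ 1) (x y : K)
    (hx : ‖x‖ ≤ 1) (hy : ‖y‖ ≤ 1) :
    ∃ q : K, ‖q‖ ≤ 1 ∧ F.eval (x + y) = F.eval x + F.derivative.eval x * y + q * y ^ 2 := by
  set O := unitBallSubring K
  set G := F.toSubring O (coeffs_subset_unitBallSubring hF) with hG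
  have hmap : G.map O.subtype = F := map_toSubring _ _ _
  set X' : O := ⟨x, hx⟩
  set Y' : O := ⟨y, hy⟩
  obtain ⟨q, hq⟩ := G.binomExpansion X' Y'
  refine ⟨(q : K), q.2, ?_⟩
  have e1 : F.eval (x + y) = ((G.eval (X' + Y') : O) : K) := by
    rw [← hmap, ← eval_map_subring]; norm_cast
  have e2 : F.eval x = ((G.eval X' : O) : K) := by rw [← hmap, ← eval_map_subring]
  have e3 : F.derivative.eval x = ((G.derivative.eval X' : O) : K) := by
    rw [← hmap, derivative_map, ← eval_map_subring]
  rw [e1, e2, e3, hq]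
  push_cast
  ring

lemma eval_lip (F : K[X]) (hF : ∀ i, ‖F.coeff i‖ ≤ 1) (x y : K)
    (hx : ‖x‖ ≤ 1) (hy : ‖y‖ ≤ 1) :
    ‖F.eval x - F.eval y‖ ≤ ‖x - y‖ := by
  set O := unitBallSubring K
  set G := F.toSubring O (coeffs_subset_unitBallSubring hF) with hG
  have hmap : G.map O.subtype = F := map_toSubring _ _ _
  set X' : O := ⟨x, hx⟩
  set Y' : O := ⟨y, hy⟩
  obtain ⟨z, hz⟩ := G.evalSubFactor X' Y'
  have e2 : F.eval x = ((G.eval X' : O) : K) := by rw [← hmap, ← eval_map_subring]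
  have e3 : F.eval y = ((G.eval Y' : O) : K) := by rw [← hmap, ← eval_map_subring]
  have e : F.eval x - F.eval y = (z : K) * (x - y) :=
    calc F.eval x - F.eval y = ((G.eval X' - G.eval Y' : O) : K) := by rw [e2, e3]; push_cast; ring
    _ = ((z * (X' - Y') : O) : K) := by rw [hz]
    _ = (z : K) * (x - y) := by push_cast; ring
  rw [e, norm_mul]
  exact mul_le_of_le_one_left (norm_nonneg _) z.2

lemma eval_norm_le_one (F : K[X]) (hF : ∀ i, ‖F.coeff i‖ ≤ 1) (x : K) (hx : ‖x‖ ≤ 1) :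
    ‖F.eval x‖ ≤ 1 := by
  set O := unitBallSubring K
  set G := F.toSubring O (coeffs_subset_unitBallSubring hF) with hG
  have hmap : G.map O.subtype = F := map_toSubring _ _ _
  have e2 : F.eval x = ((G.eval ⟨x, hx⟩ : O) : K) := by rw [← hmap, ← eval_map_subring]
  rw [e2]
  exact (G.eval ⟨x, hx⟩).2
end Hensel

section HenselMain
variable {K : Type*} [NormedField K] [IsUltrametricDist K]

lemma derivative_coeff_le_one {F : K[X]} (hF : ∀ i, ‖F.coeff i‖ ≤ 1) (i : ℕ) :
    ‖F.derivative.coeff i‖ ≤ 1 := by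
  rw [coeff_derivative, norm_mul]
  calc ‖F.coeff (i + 1)‖ * ‖((i : K) + 1)‖ ≤ 1 * 1 := by
        refine mul_le_mul (hF _) ?_ (norm_nonneg _) zero_le_one
        have := IsUltrametricDist.norm_natCast_le_one K (i + 1)
        push_cast at this
        exact this
    _ = 1 := by ring

lemma hensel_root [CompleteSpace K] (F : K[X]) (hF : ∀ i, ‖F.coeff i‖ ≤ 1)
    (a : K) (ha : ‖a‖ ≤ 1) (h : ‖F.eval a‖ < ‖F.derivative.eval a‖ ^ 2) :
    ∃ z : K, F.eval z = 0 := by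
  set d := ‖F.derivative.eval a‖ with hd_def
  have hd2 : 0 < d ^ 2 := lt_of_le_of_lt (norm_nonneg _) h
  have hd : 0 < d := by
    rcases (lt_or_eq_of_le (norm_nonneg (F.derivative.eval a))) with h' | h'
    · exact h'
    · exfalso; rw [hd_def, ← h'] at hd2; simp at hd2
  have hd1 : d ≤ 1 := eval_norm_le_one F.derivative (derivative_coeff_le_one hF) a ha
  set t := ‖F.eval a‖ / d ^ 2 with ht_def
  have ht0 : 0 ≤ t := div_nonneg (norm_nonneg _) hd2.le
  have ht1 : t < 1 := (div_lt_one hd2).2 h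
  let z : ℕ → K := fun n => Nat.rec a (fun _ zn => zn - F.eval zn / F.derivative.eval zn) n
  have hz0 : z 0 = a := rfl
  have hzs : ∀ n, z (n + 1) = z n - F.eval (z n) / F.derivative.eval (z n) := fun _ => rfl
  have inv : ∀ n, ‖z n‖ ≤ 1 ∧ ‖F.derivative.eval (z n)‖ = d ∧
      ‖F.eval (z n)‖ ≤ d ^ 2 * t ^ 2 ^ n := by
    intro n
    induction n with
    | zero =>
      refine ⟨ha, rfl, ?_⟩
      have hte : t ^ 2 ^ 0 = t := by norm_num
      rw [hz0, hte, ht_def, mul_div_cancel₀ _ (ne_of_gt hd2)]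
    | succ n ihn =>
      obtain ⟨h1, h2, h3⟩ := ihn
      have hdz : F.derivative.eval (z n) ≠ 0 := by
        intro h0; rw [h0] at h2; simp only [norm_zero] at h2; exact hd.ne h2
      set w := F.eval (z n) / F.derivative.eval (z n) with hw_def
      have htp1 : t ^ 2 ^ n ≤ 1 := pow_le_one₀ ht0 ht1.le
      have hw : ‖w‖ ≤ d * t ^ 2 ^ n := by
        rw [hw_def, norm_div, h2, div_le_iff₀ hd]
        calc ‖F.eval (z n)‖ ≤ d ^ 2 * t ^ 2 ^ n := h3
          _ = d * t ^ 2 ^ n * d := by ring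
      have hw1 : ‖w‖ ≤ 1 := hw.trans (by nlinarith)
      have hzn1 : ‖z (n + 1)‖ ≤ 1 := by
        rw [hzs n, sub_eq_add_neg]
        refine (norm_add_le_max _ _).trans (max_le h1 ?_)
        rw [norm_neg, ← hw_def]
        exact hw1
      obtain ⟨q, hq1, hq2⟩ := taylor_bound F hF (z n) (-w) h1 (by rw [norm_neg]; exact hw1)
      have hstep : z (n + 1) = z n + -w := by rw [hzs n]; ring
      have heval : F.eval (z (n + 1)) = q * w ^ 2 := by
        rw [hstep, hq2]
        have hcan : F.derivative.eval (z n) * w = F.eval (z n) := by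
          rw [hw_def, mul_div_cancel₀ _ hdz]
        have : F.derivative.eval (z n) * -w = -F.eval (z n) := by rw [mul_neg, hcan]
        rw [this]; ring
      have h3' : ‖F.eval (z (n + 1))‖ ≤ d ^ 2 * t ^ 2 ^ (n + 1) := by
        rw [heval, norm_mul, norm_pow]
        calc ‖q‖ * ‖w‖ ^ 2 ≤ 1 * (d * t ^ 2 ^ n) ^ 2 := by
              refine mul_le_mul hq1 ?_ (by positivity) zero_le_one
              exact pow_le_pow_left₀ (norm_nonneg _) hw 2
          _ = d ^ 2 * t ^ 2 ^ (n + 1) := by rw [pow_succ 2 n, pow_mul]; ring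
      have hder : ‖F.derivative.eval (z (n + 1))‖ = d := by
        have hlip : ‖F.derivative.eval (z (n + 1)) - F.derivative.eval (z n)‖ ≤
            ‖z (n + 1) - z n‖ :=
          eval_lip F.derivative (derivative_coeff_le_one hF) _ _ hzn1 h1
        have hdiff : ‖z (n + 1) - z n‖ = ‖w‖ := by
          rw [hzs n]; simp [hw_def]
        have hlt : ‖F.derivative.eval (z (n + 1)) - F.derivative.eval (z n)‖ < d := by
          refine lt_of_le_of_lt (hlip.trans (hdiff.le.trans hw)) ?_
          calc d * t ^ 2 ^ n < d * 1 := by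
                refine mul_lt_mul_of_pos_left ?_ hd
                exact pow_lt_one₀ ht0 ht1 (by positivity)
            _ = d := mul_one d
        have hle : ‖F.derivative.eval (z (n + 1))‖ ≤ d := by
          have := norm_add_le_max (F.derivative.eval (z (n + 1)) - F.derivative.eval (z n))
            (F.derivative.eval (z n))
          simp only [sub_add_cancel] at this
          exact this.trans (max_le hlt.le h2.le)
        have hge : d ≤ ‖F.derivative.eval (z (n + 1))‖ := by
          have := norm_add_le_max (F.derivative.eval (z n) - F.derivative.eval (z (n + 1)))
            (F.derivative.eval (z (n + 1)))
          simp only [sub_add_cancel] at this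
          rw [h2] at this
          rcases max_cases ‖F.derivative.eval (z n) - F.derivative.eval (z (n + 1))‖
            ‖F.derivative.eval (z (n + 1))‖ with ⟨hc, -⟩ | ⟨hc, -⟩
          · rw [hc] at this
            exfalso
            rw [norm_sub_rev] at this
            exact absurd (lt_of_le_of_lt this hlt) (lt_irrefl _)
          · rwa [hc] at this
        exact le_antisymm hle hge
      exact ⟨hzn1, hder, h3'⟩
  have hdist : ∀ n, dist (z n) (z (n + 1)) ≤ d * t ^ n := by
    intro n
    obtain ⟨h1, h2, h3⟩ := inv n
    have hdz : F.derivative.eval (z n) ≠ 0 := by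
      intro h0; rw [h0] at h2; simp only [norm_zero] at h2; exact hd.ne h2
    rw [dist_eq_norm, hzs n]
    have : z n - (z n - F.eval (z n) / F.derivative.eval (z n)) =
        F.eval (z n) / F.derivative.eval (z n) := by ring
    rw [this, norm_div, h2, div_le_iff₀ hd]
    calc ‖F.eval (z n)‖ ≤ d ^ 2 * t ^ 2 ^ n := h3
      _ ≤ d ^ 2 * t ^ n := by
          refine mul_le_mul_of_nonneg_left ?_ (by positivity)
          exact pow_le_pow_of_le_one ht0 ht1.le (Nat.le_of_lt (Nat.lt_two_pow_self (n := n)))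
      _ = d * t ^ n * d := by ring
  have hcauchy : CauchySeq z := cauchySeq_of_le_geometric t d ht1 hdist
  obtain ⟨ζ, hζ⟩ := cauchySeq_tendsto_of_complete hcauchy
  refine ⟨ζ, ?_⟩
  have hFc : Tendsto (fun n => F.eval (z n)) atTop (𝓝 (F.eval ζ)) :=
    (F.continuous_aeval.tendsto ζ).comp hζ
  have hzero : Tendsto (fun n => ‖F.eval (z n)‖) atTop (𝓝 0) := by
    refine squeeze_zero (g := fun n => d ^ 2 * t ^ n) (fun n => norm_nonneg _) (fun n => ?_) ?_
    · exact (inv n).2.2.trans (by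
        refine mul_le_mul_of_nonneg_left ?_ (by positivity)
        exact pow_le_pow_of_le_one ht0 ht1.le (Nat.le_of_lt (Nat.lt_two_pow_self (n := n))))
    · simpa using (tendsto_pow_atTop_nhds_zero_of_lt_one ht0 ht1).const_mul (d ^ 2)
  have hnorm : Tendsto (fun n => ‖F.eval (z n)‖) atTop (𝓝 ‖F.eval ζ‖) :=
    (continuous_norm.tendsto _).comp hFc
  exact norm_eq_zero.mp (tendsto_nhds_unique hnorm hzero)

end HenselMain

section Helpers

lemma eval_norm_le_sum {K : Type*} [NormedField K] (g : K[X]) (x : K) (R : ℝ) (hx : ‖x‖ ≤ R) :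
    ‖g.eval x‖ ≤ ∑ i ∈ Finset.range (g.natDegree + 1), ‖g.coeff i‖ * R ^ i := by
  rw [eval_eq_sum_range]
  refine (norm_sum_le _ _).trans (Finset.sum_le_sum fun i _ => ?_)
  rw [norm_mul, norm_pow]
  exact mul_le_mul_of_nonneg_left (pow_le_pow_left₀ (norm_nonneg _) hx i) (norm_nonneg _)

lemma root_norm_le_one {K : Type*} [NormedField K] [IsUltrametricDist K] (q : K[X])
    (hm : q.Monic) (hq : ∀ i, ‖q.coeff i‖ ≤ 1) (hdeg : 0 < q.natDegree) {β : K}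
    (hroot : q.eval β = 0) : ‖β‖ ≤ 1 := by
  by_contra hb
  push_neg at hb
  have hsum : (∑ i ∈ Finset.range q.natDegree, q.coeff i * β ^ i) + β ^ q.natDegree = 0 := by
    rw [← hroot, eval_eq_sum_range, Finset.sum_range_succ, hm.coeff_natDegree, one_mul]
  have hkey : β ^ q.natDegree = -∑ i ∈ Finset.range q.natDegree, q.coeff i * β ^ i := by
    linear_combination hsum
  have hle : ‖β‖ ^ q.natDegree ≤ ‖β‖ ^ (q.natDegree - 1) := by
    rw [← norm_pow, hkey, norm_neg]
    refine IsUltrametricDist.norm_sum_le_of_forall_le_of_nonneg (by positivity) fun i hi => ?_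
    rw [norm_mul, norm_pow]
    calc ‖q.coeff i‖ * ‖β‖ ^ i ≤ 1 * ‖β‖ ^ (q.natDegree - 1) := by
          refine mul_le_mul (hq i) ?_ (by positivity) zero_le_one
          refine pow_le_pow_right₀ hb.le ?_
          have := Finset.mem_range.mp hi
          omega
      _ = ‖β‖ ^ (q.natDegree - 1) := one_mul _
  have hlt : ‖β‖ ^ (q.natDegree - 1) < ‖β‖ ^ q.natDegree := by
    refine pow_lt_pow_right₀ hb ?_
    omega
  linarith

lemma coeff_comp_C_mul_X {R : Type*} [CommRing R] (p : R[X]) (c : R) (i : ℕ) :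
    (p.comp (C c * X)).coeff i = p.coeff i * c ^ i := by
  rw [comp, eval₂_eq_sum, Polynomial.sum_def, finset_sum_coeff]
  have hterm : ∀ e ∈ p.support, (C (p.coeff e) * (C c * X) ^ e).coeff i
      = if e = i then p.coeff e * c ^ e else 0 := by
    intro e _
    rw [mul_pow, ← C_pow, ← mul_assoc, ← C_mul, coeff_C_mul, coeff_X_pow]
    by_cases h : i = e
    · simp [h]
    · simp [h, Ne.symm h]
  rw [Finset.sum_congr rfl hterm, Finset.sum_ite_eq' p.support i (fun e => p.coeff e * c ^ e)]
  by_cases h : i ∈ p.support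
  · simp [h]
  · simp [h, notMem_support_iff.mp h]

end Helpers



/-- Let `k` be a field complete with respect to a nontrivial non-Archimedean
absolute value, `kac` an algebraic closure of `k` with the (unique) extension of the absolute
value, and `C` the completion `ℂ_k` of `kac` (a complete valued field in which `kac` embeds
isometrically-densely).  Then `C` is separably closed. -/
theorem completion_of_algebraic_closure_isSepClosed
    {k kac C : Type*} [Field k] [Field kac] [Field C]
    [Algebra k kac] [IsAlgClosure k kac]
    (ι : kac →+* C) (v : AbsoluteValue C ℝ)
    -- the absolute value is non-Archimedean
    (hna : ∀ x y : C, v (x + y) ≤ max (v x) (v y))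
    -- the absolute value is nontrivial on `k`
    (hnontriv : ∃ a : k, a ≠ 0 ∧ v (ι (algebraMap k kac a)) ≠ 1)
    -- `k` is complete
    (hkcomplete : ∀ f : ℕ → k,
      (∀ ε : ℝ, 0 < ε → ∃ N : ℕ, ∀ m ≥ N, ∀ n ≥ N,
        v (ι (algebraMap k kac (f m - f n))) < ε) →
      ∃ l : k, ∀ ε : ℝ, 0 < ε → ∃ N : ℕ, ∀ n ≥ N,
        v (ι (algebraMap k kac (f n - l))) < ε)
    -- `kac` is dense in `C`
    (hdense : ∀ (y : C) (ε : ℝ), 0 < ε → ∃ x : kac, v (y - ι x) < ε)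
    -- `C` is complete
    (hCcomplete : ∀ f : ℕ → C,
      (∀ ε : ℝ, 0 < ε → ∃ N : ℕ, ∀ m ≥ N, ∀ n ≥ N, v (f m - f n) < ε) →
      ∃ l : C, ∀ ε : ℝ, 0 < ε → ∃ N : ℕ, ∀ n ≥ N, v (f n - l) < ε) :
    IsSepClosed C := by
  classical
  letI : NormedField C := v.toNormedField
  have hnorm : ∀ x : C, ‖x‖ = v x := fun _ => rfl
  haveI : IsUltrametricDist C := by
    refine isUltrametricDist_of_forall_norm_add_le_max_norm ?_
    intro x y
    exact hna x y
  haveI : CompleteSpace C := by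
    apply Metric.complete_of_cauchySeq_tendsto
    intro f hf
    rw [Metric.cauchySeq_iff] at hf
    obtain ⟨l, hl⟩ := hCcomplete f (fun ε hε => by
      obtain ⟨N, hN⟩ := hf ε hε
      refine ⟨N, fun m hm n hn => ?_⟩
      have := hN m hm n hn
      rwa [dist_eq_norm] at this)
    refine ⟨l, Metric.tendsto_atTop.2 fun ε hε => ?_⟩
    obtain ⟨N, hN⟩ := hl ε hε
    refine ⟨N, fun n hn => ?_⟩
    have := hN n hn
    rwa [dist_eq_norm]
  refine IsSepClosed.of_exists_root C fun p hmonic hirr hsep => ?_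
  set r := p.natDegree with hr_def
  have hr : 0 < r := hirr.natDegree_pos
  -- a scaling element of large norm
  obtain ⟨a0, ha0, hva0⟩ := hnontriv
  set x0 : C := ι (algebraMap k kac a0) with hx0_def
  have hx0 : x0 ≠ 0 := by
    simp only [hx0_def, ne_eq, _root_.map_eq_zero]
    exact ha0
  have hx0pos : 0 < ‖x0‖ := norm_pos_iff.2 hx0
  have hgex : ∃ g : C, 1 < ‖g‖ := by
    rcases lt_or_gt_of_ne (show ‖x0‖ ≠ 1 from hva0) with hlt | hgt
    · exact ⟨x0⁻¹, by rw [norm_inv]; exact (one_lt_inv₀ hx0pos).2 hlt⟩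
    · exact ⟨x0, hgt⟩
  obtain ⟨g, hg⟩ := hgex
  set B0 : ℝ := 1 + ∑ i ∈ Finset.range (r + 1), ‖p.coeff i‖ with hB0_def
  have hB0sum : (0:ℝ) ≤ ∑ i ∈ Finset.range (r + 1), ‖p.coeff i‖ :=
    Finset.sum_nonneg fun i _ => norm_nonneg _
  have hB01 : 1 ≤ B0 := by rw [hB0_def]; linarith
  have hB0coeff : ∀ i, i ≤ r → ‖p.coeff i‖ ≤ B0 := by
    intro i hi
    rw [hB0_def]
    have : ‖p.coeff i‖ ≤ ∑ j ∈ Finset.range (r + 1), ‖p.coeff j‖ :=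
      Finset.single_le_sum (fun j _ => norm_nonneg _) (Finset.mem_range.mpr (by omega))
    linarith
  obtain ⟨m, hm⟩ := pow_unbounded_of_one_lt B0 hg
  set c : C := g ^ m with hc_def
  set R : ℝ := ‖c‖ with hR_def
  have hRB0 : B0 < R := by rw [hR_def, hc_def, norm_pow]; exact hm
  have hR1 : 1 < R := lt_of_le_of_lt hB01 hRB0
  have hR0 : 0 < R := lt_trans zero_lt_one hR1
  have hc0 : c ≠ 0 := norm_pos_iff.mp (hR_def ▸ hR0)
  set u : C := (c ^ r)⁻¹ with hu_def
  have hu0 : u ≠ 0 := inv_ne_zero (pow_ne_zero _ hc0)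
  have hnu : ‖u‖ = (R ^ r)⁻¹ := by rw [hu_def, norm_inv, norm_pow, hR_def]
  set P : C[X] := Polynomial.C u * p.comp (Polynomial.C c * X) with hP_def
  have hPcoeff : ∀ i, P.coeff i = u * (p.coeff i * c ^ i) := by
    intro i
    rw [hP_def, coeff_C_mul, coeff_comp_C_mul_X]
  have hPcoeffr : P.coeff r = 1 := by
    rw [hPcoeff, hmonic.coeff_natDegree, one_mul, hu_def, inv_mul_cancel₀ (pow_ne_zero _ hc0)]
  have hPbd : ∀ i, ‖P.coeff i‖ ≤ 1 := by
    intro i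
    rcases lt_trichotomy i r with hi | hi | hi
    · rw [hPcoeff, norm_mul, norm_mul, norm_pow, hnu, ← hR_def]
      rw [inv_mul_le_iff₀ (by positivity)]
      have hgoal : ‖p.coeff i‖ * R ^ i ≤ R ^ r := by
        calc ‖p.coeff i‖ * R ^ i ≤ B0 * R ^ (r - 1) := by
              refine mul_le_mul (hB0coeff i hi.le) (pow_le_pow_right₀ hR1.le (by omega))
                (by positivity) (by linarith)
          _ ≤ R * R ^ (r - 1) := by
              refine mul_le_mul_of_nonneg_right hRB0.le (by positivity)
          _ = R ^ r := by rw [← pow_succ']; congr 1; omega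
      simpa using hgoal
    · rw [hi, hPcoeffr, norm_one]
    · rw [hPcoeff, coeff_eq_zero_of_natDegree_lt hi]
      simp
  have hPeval : ∀ x : C, P.eval x = u * p.eval (c * x) := by
    intro x
    rw [hP_def]
    simp [eval_comp]
  have hP'eval : ∀ x : C, P.derivative.eval x = u * (c * p.derivative.eval (c * x)) := by
    intro x
    rw [hP_def, derivative_C_mul, derivative_comp, derivative_C_mul_X]
    simp [eval_comp]
  have hPdeg : P.natDegree ≤ r := by
    refine (natDegree_C_mul_le _ _).trans ?_
    refine (natDegree_comp_le).trans ?_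
    have : (Polynomial.C c * X : C[X]).natDegree ≤ 1 :=
      (natDegree_C_mul_le _ _).trans natDegree_X_le
    calc p.natDegree * (Polynomial.C c * X : C[X]).natDegree ≤ r * 1 :=
          Nat.mul_le_mul le_rfl this
      _ = r := mul_one r
  -- separability: coprimality with derivative
  obtain ⟨A, B, hAB⟩ := hsep
  set MA : ℝ := 1 + ∑ i ∈ Finset.range (A.natDegree + 1), ‖A.coeff i‖ * R ^ i with hMA_def
  set MB : ℝ := 1 + ∑ i ∈ Finset.range (B.natDegree + 1), ‖B.coeff i‖ * R ^ i with hMB_def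
  have hMAsum : (0:ℝ) ≤ ∑ i ∈ Finset.range (A.natDegree + 1), ‖A.coeff i‖ * R ^ i :=
    Finset.sum_nonneg fun i _ => by positivity
  have hMBsum : (0:ℝ) ≤ ∑ i ∈ Finset.range (B.natDegree + 1), ‖B.coeff i‖ * R ^ i :=
    Finset.sum_nonneg fun i _ => by positivity
  have hMA0 : 0 < MA := by rw [hMA_def]; linarith
  have hMB0 : 0 < MB := by rw [hMB_def]; linarith
  have hAbd : ∀ x : C, ‖x‖ ≤ R → ‖A.eval x‖ ≤ MA := by
    intro x hx
    refine (eval_norm_le_sum A x R hx).trans ?_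
    rw [hMA_def]; linarith
  have hBbd : ∀ x : C, ‖x‖ ≤ R → ‖B.eval x‖ ≤ MB := by
    intro x hx
    refine (eval_norm_le_sum B x R hx).trans ?_
    rw [hMB_def]; linarith
  set δ : ℝ := (R ^ r)⁻¹ * R * MB⁻¹ with hδ_def
  have hδ0 : 0 < δ := by rw [hδ_def]; positivity
  set ε : ℝ := min 1 (min (δ ^ 2 / 2) ((2 * R ^ r * MA)⁻¹)) with hε_def
  have hε0 : 0 < ε := by
    rw [hε_def]
    refine lt_min zero_lt_one (lt_min (by positivity) (by positivity))
  have hε1 : ε ≤ 1 := min_le_left _ _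
  have hεδ : ε < δ ^ 2 := by
    calc ε ≤ δ ^ 2 / 2 := (min_le_right _ _).trans (min_le_left _ _)
      _ < δ ^ 2 := by nlinarith
  have hεMA : ε ≤ (2 * R ^ r * MA)⁻¹ := (min_le_right _ _).trans (min_le_right _ _)
  -- approximate the coefficients of P by elements of kac
  have hxi : ∀ i : ℕ, ∃ x : kac, v (P.coeff i - ι x) < ε := fun i => hdense (P.coeff i) ε hε0
  choose xi hxi using hxi
  set Q : kac[X] := X ^ r + ∑ i ∈ Finset.range r, Polynomial.C (xi i) * X ^ i with hQ_def
  have hsumdeg : (∑ i ∈ Finset.range r, Polynomial.C (xi i) * X ^ i : kac[X]).degree <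
      ((r : ℕ) : WithBot ℕ) := by
    refine lt_of_le_of_lt (degree_sum_le _ _) ?_
    rw [Finset.sup_lt_iff (by exact_mod_cast WithBot.bot_lt_coe r)]
    intro i hi
    refine lt_of_le_of_lt (degree_mul_le _ _) ?_
    refine lt_of_le_of_lt (add_le_add degree_C_le (degree_X_pow i).le) ?_
    rw [zero_add]
    exact_mod_cast WithBot.coe_lt_coe.mpr (Finset.mem_range.mp hi)
  have hQmonic : Q.Monic := by
    rw [hQ_def]
    exact monic_X_pow_add hsumdeg
  have hιinj : Function.Injective ι := ι.injective
  have hQdeg : Q.degree = (r : WithBot ℕ) := by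
    rw [hQ_def, degree_add_eq_left_of_degree_lt (by rw [degree_X_pow]; exact hsumdeg)]
    exact degree_X_pow r
  have hQnatdeg : Q.natDegree = r := natDegree_eq_of_degree_eq_some hQdeg
  haveI : IsAlgClosed kac := IsAlgClosure.isAlgClosed k
  obtain ⟨y, hy⟩ := IsAlgClosed.exists_root Q (by rw [hQdeg]; exact_mod_cast hr.ne')
  set β : C := ι y with hβ_def
  set q : C[X] := Q.map ι with hq_def
  have hqroot : q.eval β = 0 := by
    rw [hq_def, hβ_def, eval_map, eval₂_at_apply (p := Q) ι y,
      show Q.eval y = 0 from hy, map_zero]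
  have hqmonic : q.Monic := hQmonic.map ι
  have hqnatdeg : q.natDegree = r := by
    rw [hq_def, natDegree_map_eq_of_injective hιinj, hQnatdeg]
  have hQcoefflt : ∀ i, i < r → Q.coeff i = xi i := by
    intro i hi
    rw [hQ_def, coeff_add, coeff_X_pow, if_neg (by omega), zero_add, finset_sum_coeff]
    have hterm : ∀ j ∈ Finset.range r, (Polynomial.C (xi j) * X ^ j : kac[X]).coeff i
        = if i = j then xi j else 0 := by
      intro j _
      rw [coeff_C_mul, coeff_X_pow]
      by_cases h : i = j <;> simp [h]
    rw [Finset.sum_congr rfl hterm, Finset.sum_ite_eq]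
    simp [Finset.mem_range.mpr hi]
  have hclose : ∀ i, ‖P.coeff i - q.coeff i‖ ≤ ε := by
    intro i
    rcases lt_trichotomy i r with hi | hi | hi
    · rw [hq_def, coeff_map, hQcoefflt i hi]
      exact (hxi i).le
    · have hq1 : q.coeff i = 1 := by
        rw [hi, ← hqnatdeg]
        exact hqmonic.coeff_natDegree
      rw [hq1, hi, hPcoeffr, sub_self, norm_zero]
      exact hε0.le
    · rw [coeff_eq_zero_of_natDegree_lt (lt_of_le_of_lt hPdeg hi),
        coeff_eq_zero_of_natDegree_lt (by rw [hqnatdeg]; exact hi), sub_zero, norm_zero]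
      exact hε0.le
  have hqbd : ∀ i, ‖q.coeff i‖ ≤ 1 := by
    intro i
    have e : q.coeff i = P.coeff i + -(P.coeff i - q.coeff i) := by ring
    rw [e]
    refine (norm_add_le_max _ _).trans (max_le (hPbd i) ?_)
    rw [norm_neg]
    exact (hclose i).trans hε1
  have hβ1 : ‖β‖ ≤ 1 := root_norm_le_one q hqmonic hqbd (by rw [hqnatdeg]; exact hr) hqroot
  have hPevalβ : ‖P.eval β‖ ≤ ε := by
    have e1 : P.eval β = ∑ i ∈ Finset.range (r + 1), P.coeff i * β ^ i :=
      eval_eq_sum_range' (Nat.lt_succ_of_le hPdeg) β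
    have e2 : q.eval β = ∑ i ∈ Finset.range (r + 1), q.coeff i * β ^ i :=
      eval_eq_sum_range' (by omega) β
    have hsub : P.eval β = ∑ i ∈ Finset.range (r + 1), (P.coeff i - q.coeff i) * β ^ i := by
      calc P.eval β = P.eval β - q.eval β := by rw [hqroot, sub_zero]
        _ = ∑ i ∈ Finset.range (r + 1), (P.coeff i * β ^ i - q.coeff i * β ^ i) := by
            rw [e1, e2, ← Finset.sum_sub_distrib]
        _ = ∑ i ∈ Finset.range (r + 1), (P.coeff i - q.coeff i) * β ^ i :=
            Finset.sum_congr rfl fun i _ => (sub_mul _ _ _).symm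
    rw [hsub]
    refine IsUltrametricDist.norm_sum_le_of_forall_le_of_nonneg hε0.le fun i _ => ?_
    rw [norm_mul, norm_pow]
    calc ‖P.coeff i - q.coeff i‖ * ‖β‖ ^ i ≤ ε * 1 :=
          mul_le_mul (hclose i) (pow_le_one₀ (norm_nonneg _) hβ1) (by positivity) hε0.le
      _ = ε := mul_one _
  set w : C := c * β with hw_def
  have hwR : ‖w‖ ≤ R := by
    rw [hw_def, norm_mul, ← hR_def]
    calc R * ‖β‖ ≤ R * 1 := mul_le_mul_of_nonneg_left hβ1 hR0.le
      _ = R := mul_one R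
  have hone : A.eval w * p.eval w + B.eval w * p.derivative.eval w = 1 := by
    have := congrArg (Polynomial.eval w) hAB
    simpa using this
  have hpw : ‖p.eval w‖ ≤ R ^ r * ε := by
    have e : p.eval w = u⁻¹ * P.eval β := by
      rw [hPeval β, ← hw_def, ← mul_assoc, inv_mul_cancel₀ hu0, one_mul]
    rw [e, norm_mul, norm_inv, hnu, inv_inv]
    exact mul_le_mul_of_nonneg_left hPevalβ (by positivity)
  have hsmall : ‖A.eval w * p.eval w‖ < 1 := by
    rw [norm_mul]
    calc ‖A.eval w‖ * ‖p.eval w‖ ≤ MA * (R ^ r * ε) :=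
          mul_le_mul (hAbd w hwR) hpw (norm_nonneg _) hMA0.le
      _ ≤ MA * (R ^ r * (2 * R ^ r * MA)⁻¹) := by
          refine mul_le_mul_of_nonneg_left
            (mul_le_mul_of_nonneg_left hεMA (by positivity)) hMA0.le
      _ = 1 / 2 := by field_simp
      _ < 1 := by norm_num
  have hBp' : 1 ≤ ‖B.eval w * p.derivative.eval w‖ := by
    have h1 : (1 : ℝ) ≤ max ‖A.eval w * p.eval w‖ ‖B.eval w * p.derivative.eval w‖ := by
      have h2 : ‖A.eval w * p.eval w + B.eval w * p.derivative.eval w‖ = 1 := by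
        rw [hone, norm_one]
      rw [← h2]
      exact norm_add_le_max _ _
    rcases le_max_iff.mp h1 with h | h
    · linarith
    · exact h
  have hp'w : MB⁻¹ ≤ ‖p.derivative.eval w‖ := by
    have h2 : 1 ≤ MB * ‖p.derivative.eval w‖ := by
      rw [norm_mul] at hBp'
      calc (1:ℝ) ≤ ‖B.eval w‖ * ‖p.derivative.eval w‖ := hBp'
        _ ≤ MB * ‖p.derivative.eval w‖ :=
            mul_le_mul_of_nonneg_right (hBbd w hwR) (norm_nonneg _)
    calc MB⁻¹ = MB⁻¹ * 1 := (mul_one _).symm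
      _ ≤ MB⁻¹ * (MB * ‖p.derivative.eval w‖) :=
          mul_le_mul_of_nonneg_left h2 (by positivity)
      _ = ‖p.derivative.eval w‖ := by field_simp
  have hδle : δ ≤ ‖P.derivative.eval β‖ := by
    rw [hP'eval β, ← hw_def, norm_mul, norm_mul, hnu, ← hR_def, hδ_def, mul_assoc]
    exact mul_le_mul_of_nonneg_left
      (mul_le_mul_of_nonneg_left hp'w hR0.le) (by positivity)
  have hhyp : ‖P.eval β‖ < ‖P.derivative.eval β‖ ^ 2 := by
    calc ‖P.eval β‖ ≤ ε := hPevalβ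
      _ < δ ^ 2 := hεδ
      _ ≤ ‖P.derivative.eval β‖ ^ 2 := pow_le_pow_left₀ hδ0.le hδle 2
  obtain ⟨ζ, hζ⟩ := hensel_root P hPbd β hβ1 hhyp
  refine ⟨c * ζ, ?_⟩
  have e := hPeval ζ
  rw [hζ] at e
  rcases mul_eq_zero.mp e.symm with h | h
  · exact absurd h hu0
  · exact h
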